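/- Suppose Σ̃_m ⪰ Σ̃_{m,dn} for all m (the event E_C). Then for any fixed matrix Ū ∈ ℝ^{d²×2k} with orthonormal columns, the total squared prediction error of the minimizers (Ŵ, B̂) of the joint squared loss satisfies: (1/2)·Σ_m ‖X̃_m(W*β*_m − Ŵβ̂_m)‖₂² ≤ sqrt(Σ_m ‖η̃_m'X̃_mŪ‖²_{V̄_m^{-1}}) · sqrt(2 Σ_m ‖X̃_m(W*β*_m − Ŵβ̂_m)‖₂²) + sqrt(Σ_m ‖η̃_m'X̃_mŪ‖²_{V̄_m^{-1}}) · sqrt(2 Σ_m ‖X̃_m(Ū − U)r_m‖²) + Σ_m ⟨η̃_m, X̃_m(U − Ū)r_m⟩, where V̄_m = Ū'Σ̃_mŪ + Ū'Σ̃_{m,dn}Ū, and Ur_m is the factorization of Ŵβ̂_m − W*β*_m with U ∈ ℝ^{d²×2k} orthonormal and r_m ∈ ℝ^{2k}. -/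

import Mathlib

open MeasureTheory Matrix Finset

noncomputable section

namespace JointLTI

/-- Euclidean (ℓ²) norm of a finite real vector. -/
def l2norm {n : Type*} [Fintype n] (v : n → ℝ) : ℝ := Real.sqrt (∑ i, v i ^ 2)

/-- Squared Euclidean norm of a finite real vector. -/
def sqNorm {n : Type*} [Fintype n] (v : n → ℝ) : ℝ := ∑ i, v i ^ 2

/-- ℓ∞ norm of a finite real vector. -/
def supNorm {n : Type*} [Fintype n] (v : n → ℝ) : ℝ := ⨆ i, |v i|

/-- Maximum absolute row sum, i.e. the ℓ∞ → ℓ∞ operator norm, of a complex matrix. -/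
def rowSumNorm {n m : Type*} [Fintype m] (A : Matrix n m ℂ) : ℝ := ⨆ i, ∑ j, ‖A i j‖

/-- The ℓ∞ → ℓ² operator norm of a complex matrix. -/
def infToTwoNorm {n m : Type*} [Fintype n] [Fintype m] (A : Matrix n m ℂ) : ℝ :=
  ⨆ v : {v : m → ℂ // ∀ j, ‖v j‖ ≤ 1},
    Real.sqrt (∑ i, ‖A.mulVec v.1 i‖ ^ 2)

/-- Spectral norm (ℓ² → ℓ² operator norm) of a real matrix. -/
def spectralNorm {n m : Type*} [Fintype n] [Fintype m] (A : Matrix n m ℝ) : ℝ :=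
  ⨆ v : {v : m → ℝ // ∑ i, v i ^ 2 ≤ 1}, l2norm (A.mulVec v.1)

/-- Squared Frobenius norm of a real matrix. -/
def frobSq {n m : Type*} [Fintype n] [Fintype m] (A : Matrix n m ℝ) : ℝ := ∑ i, ∑ j, A i j ^ 2

/-- Frobenius norm of a real matrix. -/
def frobNorm {n m : Type*} [Fintype n] [Fintype m] (A : Matrix n m ℝ) : ℝ :=
  Real.sqrt (frobSq A)

/-- The Jordan block of size `l` for the eigenvalue `lam`:
`lam` on the diagonal, ones on the superdiagonal, zeros elsewhere. -/
def jordanBlock (l : ℕ) (lam : ℂ) : Matrix (Fin l) (Fin l) ℂ :=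
  Matrix.of fun i j =>
    if (j : ℕ) = (i : ℕ) then lam else if (j : ℕ) = (i : ℕ) + 1 then 1 else 0

/-- The data of a block-diagonal Jordan matrix of total dimension `d`:
`q` blocks, of sizes `bs i`, with eigenvalues `ev i`. -/
structure JordanData (d : ℕ) where
  q : ℕ
  bs : Fin q → ℕ
  ev : Fin q → ℂ
  hsum : ∑ i, bs i = d

/-- Starting index of the `i`-th Jordan block. -/
def blockStart {q : ℕ} (bs : Fin q → ℕ) (i : Fin q) : ℕ :=
  ∑ j : Fin q, if (j : ℕ) < (i : ℕ) then bs j else 0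

/-- The block-diagonal Jordan matrix described by `J`: the Jordan blocks
`jordanBlock (J.bs i) (J.ev i)` are laid out consecutively along the diagonal. -/
def JordanData.mat {d : ℕ} (J : JordanData d) : Matrix (Fin d) (Fin d) ℂ :=
  Matrix.of fun a b =>
    ∑ i : Fin J.q,
      if blockStart J.bs i ≤ (a : ℕ) ∧ (a : ℕ) < blockStart J.bs i + J.bs i then
        (if (b : ℕ) = (a : ℕ) then J.ev i
         else if (b : ℕ) = (a : ℕ) + 1 ∧ (a : ℕ) + 1 < blockStart J.bs i + J.bs i then 1
         else 0)
      else 0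

/-- Size of the largest Jordan block. -/
def JordanData.lstar {d : ℕ} (J : JordanData d) : ℕ := Finset.univ.sup J.bs

/-- Magnitude of the largest eigenvalue (the spectral radius). -/
def JordanData.rho1 {d : ℕ} (J : JordanData d) : ℝ := ⨆ i, ‖J.ev i‖

/-- `ξ = ‖P⁻¹‖_{∞→2} ‖P‖_∞`. -/
def xiOf {d : ℕ} (P : Matrix (Fin d) (Fin d) ℂ) : ℝ := infToTwoNorm P⁻¹ * rowSumNorm P

/-- `f(Λ) = e^{1/|λ₁|} [ (l*-1)/(-log |λ₁|) + (l*-1)! / (-log |λ₁|)^{l*} ]`. -/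
def fJordan {d : ℕ} (J : JordanData d) : ℝ :=
  Real.exp (1 / J.rho1) *
    (((J.lstar : ℝ) - 1) / (-Real.log J.rho1) +
      (Nat.factorial (J.lstar - 1) : ℝ) / (-Real.log J.rho1) ^ J.lstar)

/-- `α(A) = ξ f(Λ)` when `|λ₁| < 1`, and `α(A) = ξ e^{ρ+1}` otherwise. -/
def alphaOf {d : ℕ} (P : Matrix (Fin d) (Fin d) ℂ) (J : JordanData d) (ρ : ℝ) : ℝ :=
  if J.rho1 < 1 then xiOf P * fJordan J else xiOf P * Real.exp (ρ + 1)

/-- The covariance upper bound `λ̄` of the covariance bound theorem: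
`α(A)² b̄² T` in the stable case and `α(A)² b̄² T^{2l*+1}` otherwise. -/
def lamBarOf {d : ℕ} (P : Matrix (Fin d) (Fin d) ℂ) (J : JordanData d) (ρ bbar : ℝ)
    (T : ℕ) : ℝ :=
  alphaOf P J ρ ^ 2 * bbar ^ 2 *
    (if J.rho1 < 1 then (T : ℝ) else (T : ℝ) ^ (2 * J.lstar + 1))

/-- Loewner partial order on real symmetric matrices: `A ⪯ B` iff `B - A` is
positive semidefinite. -/
def loewnerLE {n : Type*} [Fintype n] (A B : Matrix n n ℝ) : Prop := (B - A).PosSemidef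

/-- Smallest eigenvalue of a symmetric real matrix (infimum of the Rayleigh quotient). -/
def minEig {d : ℕ} (C : Matrix (Fin d) (Fin d) ℝ) : ℝ :=
  ⨅ u : {u : Fin d → ℝ // ∑ i, u i ^ 2 = 1}, u.1 ⬝ᵥ C.mulVec u.1

/-- Largest eigenvalue of a symmetric real matrix (supremum of the Rayleigh quotient). -/
def maxEig {d : ℕ} (C : Matrix (Fin d) (Fin d) ℝ) : ℝ :=
  ⨆ u : {u : Fin d → ℝ // ∑ i, u i ^ 2 = 1}, u.1 ⬝ᵥ C.mulVec u.1

open scoped Classical in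
/-- Inverse of the positive semidefinite square root of a matrix. -/
def matSqrtInv {d : ℕ} (A : Matrix (Fin d) (Fin d) ℝ) : Matrix (Fin d) (Fin d) ℝ :=
  if h : A.PosSemidef then
    ((h.1.eigenvectorUnitary : Matrix (Fin d) (Fin d) ℝ) *
      diagonal ((↑) ∘ (√·) ∘ h.1.eigenvalues) *
      (star h.1.eigenvectorUnitary : Matrix (Fin d) (Fin d) ℝ))⁻¹ else 0

/-- Sample covariance matrix `Σ = ∑_{t=0}^{T-1} x(t) x(t)'`. -/
def sampleCov {d : ℕ} (T : ℕ) (xv : ℕ → Fin d → ℝ) : Matrix (Fin d) (Fin d) ℝ :=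
  ∑ t ∈ Finset.range T, vecMulVec (xv t) (xv t)

/-- `b_T(δ) = sqrt(2σ² log(2dMT/δ))`. -/
def bT (d M T : ℕ) (σ δ : ℝ) : ℝ :=
  Real.sqrt (2 * σ ^ 2 * Real.log (2 * d * M * T / δ))

/-- The vectorized design matrix `X̃ ∈ ℝ^{Td × d²}`: its row `(t,j)` is the vector
`x̃_j(t)` which carries `x(t)` in the `j`-th size-`d` block and zeros elsewhere. -/
def designMat {d : ℕ} (T : ℕ) (xv : ℕ → Fin d → ℝ) :
    Matrix (Fin T × Fin d) (Fin d × Fin d) ℝ :=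
  Matrix.of fun p q => if q.1 = p.2 then xv (p.1 : ℕ) q.2 else 0

/-- The stacked noise vector `η̃ ∈ ℝ^{Td}`, concatenating `η(1),…,η(T)`. -/
def noiseStack {d : ℕ} (T : ℕ) (e : ℕ → Fin d → ℝ) : Fin T × Fin d → ℝ :=
  fun p => e ((p.1 : ℕ) + 1) p.2

/-- The noise processes `η_m` are adapted to `ℱ`, and are mean-zero, conditionally
`σ`-sub-Gaussian martingale differences. -/
def SubGaussianMDS {Ω : Type*} [mΩ : MeasurableSpace Ω] (μ : Measure Ω)
    (ℱ : Filtration ℕ mΩ) {d M : ℕ} (η : Fin M → ℕ → Ω → Fin d → ℝ) (σ : ℝ) : Prop :=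
  (∀ m t i, StronglyMeasurable[ℱ t] fun ω => η m t ω i) ∧
  (∀ m t i, μ[fun ω => η m (t + 1) ω i | ℱ t] =ᵐ[μ] 0) ∧
  (∀ m t (l : Fin d → ℝ),
    μ[fun ω => Real.exp (∑ i, l i * η m (t + 1) ω i) | ℱ t]
      ≤ᵐ[μ] fun _ => Real.exp ((∑ i, l i ^ 2) * σ ^ 2 / 2))

/-- The noise processes have conditional covariance `C`. -/
def CondCov {Ω : Type*} [mΩ : MeasurableSpace Ω] (μ : Measure Ω)
    (ℱ : Filtration ℕ mΩ) {d M : ℕ} (η : Fin M → ℕ → Ω → Fin d → ℝ)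
    (C : Matrix (Fin d) (Fin d) ℝ) : Prop :=
  ∀ m t i j, μ[fun ω => η m (t + 1) ω i * η m (t + 1) ω j | ℱ t] =ᵐ[μ] fun _ => C i j



lemma sqNorm_eq_dot {n : Type*} [Fintype n] (v : n → ℝ) : sqNorm v = v ⬝ᵥ v := by
  simp [sqNorm, dotProduct, sq]

lemma sqNorm_nonneg' {n : Type*} [Fintype n] (v : n → ℝ) : 0 ≤ sqNorm v :=
  Finset.sum_nonneg fun _ _ => sq_nonneg _

lemma dot_mulVec_eq {p q : Type*} [Fintype p] [Fintype q] (A : Matrix p q ℝ)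
    (v : p → ℝ) (w : q → ℝ) : v ⬝ᵥ A.mulVec w = Aᵀ.mulVec v ⬝ᵥ w := by
  rw [Matrix.dotProduct_mulVec, Matrix.mulVec_transpose]

lemma sqNorm_mulVec {p q : Type*} [Fintype p] [Fintype q] (A : Matrix p q ℝ) (w : q → ℝ) :
    sqNorm (A.mulVec w) = w ⬝ᵥ (Aᵀ * A).mulVec w := by
  rw [sqNorm_eq_dot, ← Matrix.mulVec_mulVec, dot_mulVec_eq A (A.mulVec w) w]
  exact (dotProduct_comm _ _)

lemma sqNorm_add {n : Type*} [Fintype n] (v w : n → ℝ) :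
    sqNorm (v + w) = sqNorm v + 2 * (v ⬝ᵥ w) + sqNorm w := by
  simp only [sqNorm, dotProduct, Pi.add_apply, Finset.mul_sum, ← Finset.sum_add_distrib]
  congr 1; ext i; ring

lemma sqNorm_neg {n : Type*} [Fintype n] (v : n → ℝ) : sqNorm (-v) = sqNorm v := by
  simp [sqNorm]

lemma dot_conj {p q : Type*} [Fintype p] [Fintype q] (B : Matrix p q ℝ)
    (M : Matrix p p ℝ) (r : q → ℝ) :
    r ⬝ᵥ (Bᵀ * M * B).mulVec r = B.mulVec r ⬝ᵥ M.mulVec (B.mulVec r) := by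
  rw [← Matrix.mulVec_mulVec, ← Matrix.mulVec_mulVec, dot_mulVec_eq Bᵀ r,
    Matrix.transpose_transpose]

open scoped MatrixOrder in
lemma psd_cauchy {n : Type*} [Fintype n] [DecidableEq n] {M : Matrix n n ℝ}
    (hM : M.PosSemidef) (a b : n → ℝ) :
    a ⬝ᵥ M.mulVec b ≤ Real.sqrt (a ⬝ᵥ M.mulVec a) * Real.sqrt (b ⬝ᵥ M.mulVec b) := by
  set S := CFC.sqrt M with hSdef
  have hST : Sᵀ = S := by
    rw [← Matrix.conjTranspose_eq_transpose_of_trivial]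
    exact (CFC.sqrt_nonneg M).posSemidef.isHermitian
  have key : ∀ u w : n → ℝ, u ⬝ᵥ M.mulVec w = S.mulVec u ⬝ᵥ S.mulVec w := by
    intro u w
    conv_lhs => rw [← CFC.sqrt_mul_sqrt_self M hM.nonneg]
    rw [← Matrix.mulVec_mulVec, dot_mulVec_eq S u (S.mulVec w), hST]
  rw [key a b, key a a, key b b]
  have h := Real.sum_mul_le_sqrt_mul_sqrt Finset.univ (S.mulVec a) (S.mulVec b)
  have e1 : S.mulVec a ⬝ᵥ S.mulVec a = ∑ i, (S.mulVec a i) ^ 2 := by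
    simp [dotProduct, sq]
  have e2 : S.mulVec b ⬝ᵥ S.mulVec b = ∑ i, (S.mulVec b i) ^ 2 := by
    simp [dotProduct, sq]
  rw [e1, e2]
  exact h

lemma smul_one_psd {n : Type*} [Fintype n] [DecidableEq n] {c : ℝ} (hc : 0 ≤ c) :
    (c • (1 : Matrix n n ℝ)).PosSemidef := by
  rw [Matrix.posSemidef_iff_dotProduct_mulVec]
  constructor
  · simp [Matrix.IsHermitian]
  · intro xv
    have : (c • (1 : Matrix n n ℝ)).mulVec xv = c • xv := by
      rw [Matrix.smul_mulVec, Matrix.one_mulVec]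
    rw [this]
    simp only [dotProduct_smul]
    exact smul_nonneg hc (dotProduct_star_self_nonneg xv)

lemma smul_one_pd {n : Type*} [Fintype n] [DecidableEq n] {c : ℝ} (hc : 0 < c) :
    (c • (1 : Matrix n n ℝ)).PosDef := by
  rw [Matrix.posDef_iff_dotProduct_mulVec]
  constructor
  · simp [Matrix.IsHermitian]
  · intro xv hxv
    have : (c • (1 : Matrix n n ℝ)).mulVec xv = c • xv := by
      rw [Matrix.smul_mulVec, Matrix.one_mulVec]
    rw [this]
    simp only [dotProduct_smul]
    refine smul_pos hc ?_
    exact dotProduct_star_self_pos_iff.mpr hxv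

lemma abstract_decomp {ι ρ κ σ : Type*} [Fintype ι] [Fintype ρ] [Fintype κ] [Fintype σ]
    [DecidableEq σ] [DecidableEq κ]
    (X : ι → Matrix ρ κ ℝ) (nv : ι → ρ → ℝ) (Δ : ι → κ → ℝ)
    (U Ubar : Matrix κ σ ℝ) (r : ι → σ → ℝ) (lam : ℝ)
    (V : ι → Matrix σ σ ℝ)
    (hVdef : ∀ m, V m = Ubarᵀ * ((X m)ᵀ * X m) * Ubar +
      Ubarᵀ * (lam • (1 : Matrix κ κ ℝ)) * Ubar)
    (v : ι → σ → ℝ)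
    (hvdef : ∀ m, v m = Ubarᵀ.mulVec ((X m)ᵀ.mulVec (nv m)))
    (hlam0 : 0 ≤ lam)
    (hUbar : Ubarᵀ * Ubar = 1)
    (hfact : ∀ m, Δ m = -(U.mulVec (r m)))
    (hEC : ∀ m, ((X m)ᵀ * X m - lam • (1 : Matrix κ κ ℝ)).PosSemidef)
    (hdeg : 0 < lam ∨ IsEmpty ρ)
    (hbasic : (∑ m, sqNorm ((X m).mulVec (Δ m))) ≤ 2 * ∑ m, nv m ⬝ᵥ (X m).mulVec (U.mulVec (r m))) :
    1/2 * (∑ m, sqNorm ((X m).mulVec (Δ m))) ≤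
      Real.sqrt (∑ m, v m ⬝ᵥ (V m)⁻¹.mulVec (v m)) * Real.sqrt (2 * (∑ m, sqNorm ((X m).mulVec (Δ m)))) +
      Real.sqrt (∑ m, v m ⬝ᵥ (V m)⁻¹.mulVec (v m)) * Real.sqrt (2 * (∑ m, sqNorm ((X m).mulVec ((Ubar - U).mulVec (r m))))) + (∑ m, nv m ⬝ᵥ (X m).mulVec ((U - Ubar).mulVec (r m))) := by
  classical
  have hSig : ∀ m, ((X m)ᵀ * X m).PosSemidef := by
    intro m
    have := Matrix.posSemidef_conjTranspose_mul_self (X m)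
    rwa [Matrix.conjTranspose_eq_transpose_of_trivial] at this
  have hV2 : ∀ m, V m = Ubarᵀ * ((X m)ᵀ * X m) * Ubar + lam • (1 : Matrix σ σ ℝ) := by
    intro m
    rw [hVdef m]
    congr 1
    rw [Matrix.mul_smul, Matrix.smul_mul, Matrix.mul_one, hUbar]
  have hconjpsd : ∀ m, (Ubarᵀ * ((X m)ᵀ * X m) * Ubar).PosSemidef := by
    intro m
    have := (hSig m).conjTranspose_mul_mul_same Ubar
    rwa [Matrix.conjTranspose_eq_transpose_of_trivial] at this
  have hVpsd : ∀ m, (V m).PosSemidef := by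
    intro m
    rw [hV2 m]
    exact (hconjpsd m).add (smul_one_psd hlam0)
  have hgnonneg : ∀ m, 0 ≤ r m ⬝ᵥ (V m).mulVec (r m) := by
    intro m
    simpa using (hVpsd m).dotProduct_mulVec_nonneg (r m)
  have hCSm : ∀ m, (0 ≤ v m ⬝ᵥ (V m)⁻¹.mulVec (v m)) ∧
      v m ⬝ᵥ r m ≤ Real.sqrt (v m ⬝ᵥ (V m)⁻¹.mulVec (v m)) *
        Real.sqrt (r m ⬝ᵥ (V m).mulVec (r m)) := by
    intro m
    rcases hdeg with hlp | hemp
    · have hVpd : (V m).PosDef := by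
        rw [hV2 m]
        exact Matrix.PosDef.posSemidef_add (hconjpsd m) (smul_one_pd hlp)
      have hdet : IsUnit (V m).det := hVpd.det_pos.ne'.isUnit
      have hinv1 : V m * (V m)⁻¹ = 1 := Matrix.mul_nonsing_inv _ hdet
      have hVsymm : (V m)ᵀ = V m := by
        rw [← Matrix.conjTranspose_eq_transpose_of_trivial]
        exact hVpd.isHermitian
      refine ⟨by simpa using hVpd.inv.posSemidef.dotProduct_mulVec_nonneg (v m), ?_⟩
      have key : v m ⬝ᵥ r m = ((V m)⁻¹.mulVec (v m)) ⬝ᵥ (V m).mulVec (r m) := by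
        rw [dot_mulVec_eq (V m) ((V m)⁻¹.mulVec (v m)) (r m), hVsymm,
          Matrix.mulVec_mulVec, hinv1, Matrix.one_mulVec]
      have hcs := psd_cauchy hVpd.posSemidef ((V m)⁻¹.mulVec (v m)) (r m)
      have e : ((V m)⁻¹.mulVec (v m)) ⬝ᵥ (V m).mulVec ((V m)⁻¹.mulVec (v m))
          = v m ⬝ᵥ (V m)⁻¹.mulVec (v m) := by
        rw [Matrix.mulVec_mulVec, hinv1, Matrix.one_mulVec, dotProduct_comm]
      rw [key, ← e]
      exact hcs
    · have hXz : (X m)ᵀ.mulVec (nv m) = 0 := by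
        funext q'
        simp [Matrix.mulVec, dotProduct, Finset.univ_eq_empty]
      have hv0 : v m = 0 := by rw [hvdef m, hXz, Matrix.mulVec_zero]
      constructor
      · rw [hv0]; simp
      · rw [hv0]
        simpa using mul_nonneg (Real.sqrt_nonneg
          ((0 : σ → ℝ) ⬝ᵥ (V m)⁻¹.mulVec 0)) (Real.sqrt_nonneg (r m ⬝ᵥ (V m).mulVec (r m)))
  have hsplit : ∀ m, nv m ⬝ᵥ (X m).mulVec (U.mulVec (r m))
      = v m ⬝ᵥ r m + nv m ⬝ᵥ (X m).mulVec ((U - Ubar).mulVec (r m)) := by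
    intro m
    have hUeq : U = Ubar + (U - Ubar) := by abel
    conv_lhs => rw [hUeq]
    rw [Matrix.add_mulVec, Matrix.mulVec_add, dotProduct_add]
    congr 1
    rw [dot_mulVec_eq, dot_mulVec_eq, hvdef m]
  have hstep1 : 1/2 * (∑ m, sqNorm ((X m).mulVec (Δ m))) ≤ (∑ m, v m ⬝ᵥ r m) + (∑ m, nv m ⬝ᵥ (X m).mulVec ((U - Ubar).mulVec (r m))) := by
    have heq : ∑ m, nv m ⬝ᵥ (X m).mulVec (U.mulVec (r m)) = (∑ m, v m ⬝ᵥ r m) + (∑ m, nv m ⬝ᵥ (X m).mulVec ((U - Ubar).mulVec (r m))) := by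
      rw [← Finset.sum_add_distrib]
      exact Finset.sum_congr rfl fun m _ => hsplit m
    rw [heq] at hbasic
    linarith
  have hstep2 : (∑ m, v m ⬝ᵥ r m) ≤ Real.sqrt (∑ m, v m ⬝ᵥ (V m)⁻¹.mulVec (v m)) * Real.sqrt (∑ m, r m ⬝ᵥ (V m).mulVec (r m)) := by
    calc (∑ m, v m ⬝ᵥ r m)
        ≤ ∑ m, Real.sqrt (v m ⬝ᵥ (V m)⁻¹.mulVec (v m)) *
            Real.sqrt (r m ⬝ᵥ (V m).mulVec (r m)) :=
          Finset.sum_le_sum fun m _ => (hCSm m).2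
      _ ≤ _ :=
          Real.sum_sqrt_mul_sqrt_le Finset.univ (fun m => (hCSm m).1)
            (fun m => hgnonneg m)
  have hstep3 : (∑ m, r m ⬝ᵥ (V m).mulVec (r m)) ≤ 2 * (∑ m, sqNorm ((X m).mulVec (Ubar.mulVec (r m)))) := by
    rw [Finset.mul_sum]
    refine Finset.sum_le_sum fun m _ => ?_
    have hg1 : r m ⬝ᵥ (V m).mulVec (r m)
        = Ubar.mulVec (r m) ⬝ᵥ ((X m)ᵀ * X m).mulVec (Ubar.mulVec (r m))
          + lam * (r m ⬝ᵥ r m) := by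
      rw [hV2 m, Matrix.add_mulVec, dotProduct_add, dot_conj]
      congr 1
      simp [Matrix.smul_mulVec, Matrix.one_mulVec, smul_eq_mul]
    have hrr : r m ⬝ᵥ r m = Ubar.mulVec (r m) ⬝ᵥ Ubar.mulVec (r m) := by
      have h1 := dot_conj Ubar (1 : Matrix κ κ ℝ) (r m)
      rw [Matrix.mul_one, hUbar, Matrix.one_mulVec, Matrix.one_mulVec] at h1
      rw [← h1]
    have hEm := (hEC m).dotProduct_mulVec_nonneg (Ubar.mulVec (r m))
    have hkey : lam * (Ubar.mulVec (r m) ⬝ᵥ Ubar.mulVec (r m)) ≤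
        Ubar.mulVec (r m) ⬝ᵥ ((X m)ᵀ * X m).mulVec (Ubar.mulVec (r m)) := by
      simp only [Matrix.sub_mulVec, dotProduct_sub, Matrix.smul_mulVec,
        Matrix.one_mulVec, dotProduct_smul, smul_eq_mul, star_trivial,
        sub_nonneg] at hEm
      exact hEm
    have hsq : sqNorm ((X m).mulVec (Ubar.mulVec (r m)))
        = Ubar.mulVec (r m) ⬝ᵥ ((X m)ᵀ * X m).mulVec (Ubar.mulVec (r m)) :=
      sqNorm_mulVec _ _
    rw [hg1, hrr, hsq]
    linarith
  have hPnonneg : (0:ℝ) ≤ (∑ m, sqNorm ((X m).mulVec (Δ m))) := Finset.sum_nonneg fun m _ => sqNorm_nonneg' _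
  have hQnonneg : (0:ℝ) ≤ (∑ m, sqNorm ((X m).mulVec ((Ubar - U).mulVec (r m)))) := Finset.sum_nonneg fun m _ => sqNorm_nonneg' _
  have hPa : ∑ m, sqNorm ((X m).mulVec (U.mulVec (r m))) = (∑ m, sqNorm ((X m).mulVec (Δ m))) := by
    refine Finset.sum_congr rfl fun m _ => ?_
    rw [hfact m, Matrix.mulVec_neg, sqNorm_neg]
  have hcross : ∑ m, ((X m).mulVec (U.mulVec (r m))) ⬝ᵥ
      ((X m).mulVec ((Ubar - U).mulVec (r m))) ≤
      Real.sqrt (∑ m, sqNorm ((X m).mulVec (U.mulVec (r m)))) * Real.sqrt (∑ m, sqNorm ((X m).mulVec ((Ubar - U).mulVec (r m)))) := by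
    have h := Real.sum_mul_le_sqrt_mul_sqrt (Finset.univ : Finset (ι × ρ))
      (fun z => (X z.1).mulVec (U.mulVec (r z.1)) z.2)
      (fun z => (X z.1).mulVec ((Ubar - U).mulVec (r z.1)) z.2)
    simp only [Fintype.sum_prod_type] at h
    simpa only [sqNorm, dotProduct] using h
  rw [hPa] at hcross
  have hG2 : (∑ m, sqNorm ((X m).mulVec (Ubar.mulVec (r m)))) ≤ (Real.sqrt (∑ m, sqNorm ((X m).mulVec (Δ m))) + Real.sqrt (∑ m, sqNorm ((X m).mulVec ((Ubar - U).mulVec (r m)))))^2 := by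
    have hab : ∀ m, (X m).mulVec (Ubar.mulVec (r m)) =
        (X m).mulVec (U.mulVec (r m)) + (X m).mulVec ((Ubar - U).mulVec (r m)) := by
      intro m
      have h0 : Ubar = U + (Ubar - U) := by abel
      conv_lhs => rw [h0]
      rw [Matrix.add_mulVec, Matrix.mulVec_add]
    calc (∑ m, sqNorm ((X m).mulVec (Ubar.mulVec (r m))))
        = ∑ m, (sqNorm ((X m).mulVec (U.mulVec (r m)))
            + 2 * (((X m).mulVec (U.mulVec (r m))) ⬝ᵥ
              ((X m).mulVec ((Ubar - U).mulVec (r m))))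
            + sqNorm ((X m).mulVec ((Ubar - U).mulVec (r m)))) := by
          refine Finset.sum_congr rfl fun m _ => ?_
          rw [hab m, sqNorm_add]
      _ = (∑ m, sqNorm ((X m).mulVec (Δ m))) + 2 * (∑ m, ((X m).mulVec (U.mulVec (r m))) ⬝ᵥ
            ((X m).mulVec ((Ubar - U).mulVec (r m)))) + (∑ m, sqNorm ((X m).mulVec ((Ubar - U).mulVec (r m)))) := by
          rw [Finset.sum_add_distrib, Finset.sum_add_distrib, hPa, ← Finset.mul_sum]
      _ ≤ (∑ m, sqNorm ((X m).mulVec (Δ m))) + 2 * (Real.sqrt (∑ m, sqNorm ((X m).mulVec (Δ m))) * Real.sqrt (∑ m, sqNorm ((X m).mulVec ((Ubar - U).mulVec (r m))))) + (∑ m, sqNorm ((X m).mulVec ((Ubar - U).mulVec (r m)))) := by linarith [hcross]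
      _ = (Real.sqrt (∑ m, sqNorm ((X m).mulVec (Δ m))) + Real.sqrt (∑ m, sqNorm ((X m).mulVec ((Ubar - U).mulVec (r m)))))^2 := by
          rw [add_sq, Real.sq_sqrt hPnonneg, Real.sq_sqrt hQnonneg]
          ring
  have hsqrt2G : Real.sqrt (∑ m, r m ⬝ᵥ (V m).mulVec (r m)) ≤ Real.sqrt (2 * (∑ m, sqNorm ((X m).mulVec (Δ m)))) + Real.sqrt (2 * (∑ m, sqNorm ((X m).mulVec ((Ubar - U).mulVec (r m))))) := by
    have h1 : (∑ m, r m ⬝ᵥ (V m).mulVec (r m)) ≤ 2 * (Real.sqrt (∑ m, sqNorm ((X m).mulVec (Δ m))) + Real.sqrt (∑ m, sqNorm ((X m).mulVec ((Ubar - U).mulVec (r m)))))^2 := by linarith [hstep3, hG2]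
    calc Real.sqrt (∑ m, r m ⬝ᵥ (V m).mulVec (r m))
        ≤ Real.sqrt (2 * (Real.sqrt (∑ m, sqNorm ((X m).mulVec (Δ m))) + Real.sqrt (∑ m, sqNorm ((X m).mulVec ((Ubar - U).mulVec (r m)))))^2) := Real.sqrt_le_sqrt h1
      _ = Real.sqrt 2 * (Real.sqrt (∑ m, sqNorm ((X m).mulVec (Δ m))) + Real.sqrt (∑ m, sqNorm ((X m).mulVec ((Ubar - U).mulVec (r m))))) := by
          rw [Real.sqrt_mul (by norm_num), Real.sqrt_sq (by positivity)]
      _ = Real.sqrt 2 * Real.sqrt (∑ m, sqNorm ((X m).mulVec (Δ m))) + Real.sqrt 2 * Real.sqrt (∑ m, sqNorm ((X m).mulVec ((Ubar - U).mulVec (r m)))) := by ring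
      _ = Real.sqrt (2 * (∑ m, sqNorm ((X m).mulVec (Δ m)))) + Real.sqrt (2 * (∑ m, sqNorm ((X m).mulVec ((Ubar - U).mulVec (r m))))) := by
          rw [← Real.sqrt_mul (by norm_num), ← Real.sqrt_mul (by norm_num)]
  have hSqrtSq : 0 ≤ Real.sqrt (∑ m, v m ⬝ᵥ (V m)⁻¹.mulVec (v m)) := Real.sqrt_nonneg _
  calc 1/2 * (∑ m, sqNorm ((X m).mulVec (Δ m))) ≤ (∑ m, v m ⬝ᵥ r m) + (∑ m, nv m ⬝ᵥ (X m).mulVec ((U - Ubar).mulVec (r m))) := hstep1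
    _ ≤ Real.sqrt (∑ m, v m ⬝ᵥ (V m)⁻¹.mulVec (v m)) * Real.sqrt (∑ m, r m ⬝ᵥ (V m).mulVec (r m)) + (∑ m, nv m ⬝ᵥ (X m).mulVec ((U - Ubar).mulVec (r m))) := by linarith [hstep2]
    _ ≤ Real.sqrt (∑ m, v m ⬝ᵥ (V m)⁻¹.mulVec (v m)) * (Real.sqrt (2 * (∑ m, sqNorm ((X m).mulVec (Δ m)))) + Real.sqrt (2 * (∑ m, sqNorm ((X m).mulVec ((Ubar - U).mulVec (r m)))))) + (∑ m, nv m ⬝ᵥ (X m).mulVec ((U - Ubar).mulVec (r m))) := by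
        have := mul_le_mul_of_nonneg_left hsqrt2G hSqrtSq
        linarith
    _ = Real.sqrt (∑ m, v m ⬝ᵥ (V m)⁻¹.mulVec (v m)) * Real.sqrt (2 * (∑ m, sqNorm ((X m).mulVec (Δ m)))) +
        Real.sqrt (∑ m, v m ⬝ᵥ (V m)⁻¹.mulVec (v m)) * Real.sqrt (2 * (∑ m, sqNorm ((X m).mulVec ((Ubar - U).mulVec (r m))))) + (∑ m, nv m ⬝ᵥ (X m).mulVec ((U - Ubar).mulVec (r m))) := by ring

lemma minEig_pos {d : ℕ} (hd : 0 < d) {C : Matrix (Fin d) (Fin d) ℝ} (hC : C.PosDef) :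
    0 < minEig C := by
  set S : Set (Fin d → ℝ) := {u | ∑ i, u i ^ 2 = 1} with hS
  have hclosed : IsClosed S := by
    have : S = (fun u : Fin d → ℝ => ∑ i, u i ^ 2) ⁻¹' {1} := rfl
    rw [this]
    exact isClosed_singleton.preimage (by continuity)
  have hbdd : Bornology.IsBounded S := by
    rw [isBounded_iff_forall_norm_le]
    refine ⟨1, fun u hu => ?_⟩
    rw [pi_norm_le_iff_of_nonneg zero_le_one]
    intro i
    have h1 : u i ^ 2 ≤ 1 := by
      rw [← hu]
      exact Finset.single_le_sum (fun j _ => sq_nonneg (u j)) (Finset.mem_univ i)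
    calc ‖u i‖ = |u i| := rfl
      _ ≤ 1 := (sq_le_one_iff_abs_le_one _).1 h1
  have hcomp : IsCompact S := Metric.isCompact_of_isClosed_isBounded hclosed hbdd
  have hne : S.Nonempty := by
    refine ⟨fun i => if i = ⟨0, hd⟩ then 1 else 0, ?_⟩
    simp [hS, Finset.sum_ite_eq']
  have hcont : Continuous fun u : Fin d → ℝ => u ⬝ᵥ C.mulVec u := by
    have : (fun u : Fin d → ℝ => u ⬝ᵥ C.mulVec u)
        = fun u => ∑ i, u i * ∑ j, C i j * u j := by
      ext u; simp [dotProduct, Matrix.mulVec]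
    rw [this]; continuity
  obtain ⟨u0, hu0S, hmin⟩ := hcomp.exists_isMinOn hne hcont.continuousOn
  have hu0ne : u0 ≠ 0 := by
    intro h
    rw [hS] at hu0S
    simp [h] at hu0S
  have hpos : 0 < u0 ⬝ᵥ C.mulVec u0 := by
    have := hC.dotProduct_mulVec_pos hu0ne
    simpa using this
  have : Nonempty {u : Fin d → ℝ // ∑ i, u i ^ 2 = 1} := ⟨⟨u0, hu0S⟩⟩
  exact lt_of_lt_of_le hpos (le_ciInf fun u => isMinOn_iff.mp hmin u.1 u.2)


/-- Prediction error decomposition: on the event `E_C`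
(`Σ̃_m ⪰ Σ̃_{m,dn}` for all `m`), for any fixed orthonormal `Ū ∈ ℝ^{d²×2k}`, the total
squared prediction error of the minimizers `(Ŵ, B̂)` of the joint squared loss satisfies
the three-term decomposition of Lemma 2. -/
theorem prediction_error_decomposition
    (d M T k : ℕ)
    (C : Matrix (Fin d) (Fin d) ℝ) (hC : C.PosDef)
    (A : Fin M → Matrix (Fin d) (Fin d) ℝ)
    (x η : Fin M → ℕ → Fin d → ℝ)
    -- dynamics for t = 0, …, T − 1
    (hdyn : ∀ m, ∀ t < T, x m (t + 1) = (A m).mulVec (x m t) + η m (t + 1))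
    -- shared-basis assumption, in vectorized form `Ã_m = W* β*_m`
    (Wstar : Matrix (Fin d × Fin d) (Fin k) ℝ) (βstar : Fin M → Fin k → ℝ)
    (hshared : ∀ m j i, A m j i = Wstar.mulVec (βstar m) (j, i))
    -- the joint estimator minimizes the squared loss
    (Wh : Matrix (Fin d × Fin d) (Fin k) ℝ) (bh : Fin M → Fin k → ℝ)
    (hopt : ∀ (W : Matrix (Fin d × Fin d) (Fin k) ℝ) (β : Fin M → Fin k → ℝ),
      ∑ m, sqNorm ((fun p : Fin T × Fin d => x m ((p.1 : ℕ) + 1) p.2) -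
          (designMat T (x m)).mulVec (Wh.mulVec (bh m))) ≤
        ∑ m, sqNorm ((fun p : Fin T × Fin d => x m ((p.1 : ℕ) + 1) p.2) -
          (designMat T (x m)).mulVec (W.mulVec (β m))))
    -- rank-2k factorization `Ŵ B̂ − W* B* = U R`
    (U : Matrix (Fin d × Fin d) (Fin (2 * k)) ℝ) (hU : Uᵀ * U = 1)
    (r : Fin M → Fin (2 * k) → ℝ)
    (hfact : ∀ m, Wh.mulVec (bh m) - Wstar.mulVec (βstar m) = U.mulVec (r m))
    -- a fixed orthonormal matrix Ū
    (Ubar : Matrix (Fin d × Fin d) (Fin (2 * k)) ℝ) (hUbar : Ubarᵀ * Ubar = 1)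
    -- the event `E_C` : `Σ̃_m ⪰ Σ̃_{m,dn}`
    (hEC : ∀ m, loewnerLE
      ((minEig C * T / 4) • (1 : Matrix (Fin d × Fin d) (Fin d × Fin d) ℝ))
      ((designMat T (x m))ᵀ * designMat T (x m))) :
    1 / 2 * ∑ m, sqNorm
        ((designMat T (x m)).mulVec (Wstar.mulVec (βstar m) - Wh.mulVec (bh m))) ≤
      Real.sqrt (∑ m,
          Ubarᵀ.mulVec ((designMat T (x m))ᵀ.mulVec (noiseStack T (η m))) ⬝ᵥ
            (Ubarᵀ * ((designMat T (x m))ᵀ * designMat T (x m)) * Ubar +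
              Ubarᵀ * ((minEig C * T / 4) •
                (1 : Matrix (Fin d × Fin d) (Fin d × Fin d) ℝ)) * Ubar)⁻¹.mulVec
              (Ubarᵀ.mulVec ((designMat T (x m))ᵀ.mulVec (noiseStack T (η m))))) *
        Real.sqrt (2 * ∑ m, sqNorm
          ((designMat T (x m)).mulVec (Wstar.mulVec (βstar m) - Wh.mulVec (bh m)))) +
      Real.sqrt (∑ m,
          Ubarᵀ.mulVec ((designMat T (x m))ᵀ.mulVec (noiseStack T (η m))) ⬝ᵥ
            (Ubarᵀ * ((designMat T (x m))ᵀ * designMat T (x m)) * Ubar +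
              Ubarᵀ * ((minEig C * T / 4) •
                (1 : Matrix (Fin d × Fin d) (Fin d × Fin d) ℝ)) * Ubar)⁻¹.mulVec
              (Ubarᵀ.mulVec ((designMat T (x m))ᵀ.mulVec (noiseStack T (η m))))) *
        Real.sqrt (2 * ∑ m, sqNorm
          ((designMat T (x m)).mulVec ((Ubar - U).mulVec (r m)))) +
      ∑ m, noiseStack T (η m) ⬝ᵥ
        (designMat T (x m)).mulVec ((U - Ubar).mulVec (r m)) := by
  classical
  have hy : ∀ m, (fun p : Fin T × Fin d => x m ((p.1 : ℕ) + 1) p.2)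
      = (designMat T (x m)).mulVec (Wstar.mulVec (βstar m)) + noiseStack T (η m) := by
    intro m
    funext p
    have hXw : (designMat T (x m)).mulVec (Wstar.mulVec (βstar m)) p
        = (A m).mulVec (x m (p.1 : ℕ)) p.2 := by
      simp only [designMat, Matrix.mulVec, dotProduct, Matrix.of_apply,
        Fintype.sum_prod_type_right, ite_mul, zero_mul, Finset.sum_ite_eq',
        Finset.mem_univ, if_true]
      refine Finset.sum_congr rfl fun i _ => ?_
      rw [hshared m p.2 i, mul_comm]
      rfl
    have hdx : x m ((p.1 : ℕ) + 1) p.2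
        = (A m).mulVec (x m (p.1 : ℕ)) p.2 + η m ((p.1 : ℕ) + 1) p.2 := by
      rw [hdyn m (p.1 : ℕ) p.1.isLt]
      rfl
    show x m ((p.1 : ℕ) + 1) p.2 = _
    rw [Pi.add_apply, hdx]
    congr 1
    exact hXw.symm
  have hfact' : ∀ m, Wstar.mulVec (βstar m) - Wh.mulVec (bh m) = -(U.mulVec (r m)) := by
    intro m
    rw [← hfact m]
    abel
  have hbasic : (∑ m, sqNorm ((designMat T (x m)).mulVec
        (Wstar.mulVec (βstar m) - Wh.mulVec (bh m))))
      ≤ 2 * ∑ m, noiseStack T (η m) ⬝ᵥ (designMat T (x m)).mulVec (U.mulVec (r m)) := by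
    have hb := hopt Wstar βstar
    have h1 : ∀ m, (fun p : Fin T × Fin d => x m ((p.1 : ℕ) + 1) p.2)
        - (designMat T (x m)).mulVec (Wstar.mulVec (βstar m)) = noiseStack T (η m) := by
      intro m
      rw [hy m, add_sub_cancel_left]
    have h2 : ∀ m, (fun p : Fin T × Fin d => x m ((p.1 : ℕ) + 1) p.2)
        - (designMat T (x m)).mulVec (Wh.mulVec (bh m))
        = noiseStack T (η m) + (designMat T (x m)).mulVec
            (Wstar.mulVec (βstar m) - Wh.mulVec (bh m)) := by
      intro m
      rw [hy m, Matrix.mulVec_sub]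
      abel
    simp only [h2, h1] at hb
    simp only [sqNorm_add] at hb
    rw [Finset.sum_add_distrib, Finset.sum_add_distrib] at hb
    have h3 : ∀ m, noiseStack T (η m) ⬝ᵥ (designMat T (x m)).mulVec
          (Wstar.mulVec (βstar m) - Wh.mulVec (bh m))
        = -(noiseStack T (η m) ⬝ᵥ (designMat T (x m)).mulVec (U.mulVec (r m))) := by
      intro m
      rw [hfact' m, Matrix.mulVec_neg, dotProduct_neg]
    simp only [h3, mul_neg] at hb
    rw [Finset.sum_neg_distrib, ← Finset.mul_sum] at hb
    linarith
  have hdeg : 0 < minEig C * (T : ℝ) / 4 ∨ IsEmpty (Fin T × Fin d) := by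
    rcases Nat.eq_zero_or_pos d with hd | hd
    · right
      haveI : IsEmpty (Fin d) := by rw [hd]; infer_instance
      infer_instance
    rcases Nat.eq_zero_or_pos T with hT | hT
    · right
      haveI : IsEmpty (Fin T) := by rw [hT]; infer_instance
      infer_instance
    · left
      have h1 := minEig_pos hd hC
      have h2 : (0:ℝ) < (T:ℝ) := by exact_mod_cast hT
      positivity
  have hlam0 : 0 ≤ minEig C * (T : ℝ) / 4 := by
    have hmE : 0 ≤ minEig C := by
      rcases Nat.eq_zero_or_pos d with hd | hd
      · haveI : IsEmpty {u : Fin d → ℝ // ∑ i, u i ^ 2 = 1} := by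
          constructor
          rintro ⟨u, hu⟩
          haveI : IsEmpty (Fin d) := by rw [hd]; infer_instance
          simp at hu
        have h0 : minEig C = 0 := Real.iInf_of_isEmpty _
        rw [h0]
      · exact (minEig_pos hd hC).le
    positivity
  have hEC' : ∀ m, ((designMat T (x m))ᵀ * designMat T (x m)
      - (minEig C * (T : ℝ) / 4) • (1 : Matrix (Fin d × Fin d) (Fin d × Fin d) ℝ)).PosSemidef :=
    fun m => hEC m
  exact abstract_decomp (fun m => designMat T (x m)) (fun m => noiseStack T (η m))
    (fun m => Wstar.mulVec (βstar m) - Wh.mulVec (bh m)) U Ubar r (minEig C * (T : ℝ) / 4)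
    (fun m => Ubarᵀ * ((designMat T (x m))ᵀ * designMat T (x m)) * Ubar +
      Ubarᵀ * ((minEig C * (T : ℝ) / 4) •
        (1 : Matrix (Fin d × Fin d) (Fin d × Fin d) ℝ)) * Ubar)
    (fun _ => rfl)
    (fun m => Ubarᵀ.mulVec ((designMat T (x m))ᵀ.mulVec (noiseStack T (η m))))
    (fun _ => rfl)
    hlam0 hUbar hfact' hEC' hdeg hbasic


end JointLTI
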